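/- Let N be a finite nonempty player set, T ≥ 1, and for each nonempty S ⊆ N let w_S : {1,…,T} → ℝ be a monotone nondecreasing list of realizations, with ν_S = (1/T)·∑_{i=1}^T δ_{w_S(i)} the corresponding discrete uniform measure. Let r : N → ℝ with r_i ≥ 0 for all i and r(N) = 1. Then for every nonempty S ⊆ N, the pushforward of ν_N under the map z ↦ r(S)·z second-order stochastically dominates ν_S if and only if for every k ∈ {1,…,T}, r(S)·∑_{i=1}^k w_N(i) ≥ ∑_{i=1}^k w_S(i). -/

import Mathlib

open MeasureTheory ProbabilityTheory
open scoped NNReal ENNReal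

/-- `P` second-order stochastically dominates `Q`. -/
def SSD (P Q : Measure ℝ) : Prop :=
  ∀ u : ℝ, (∫ z in Set.Iic u, (cdf P z - cdf Q z)) ≤ 0

/-- The discrete uniform measure with `T` equiprobable realizations `x 0, …, x (T-1)`. -/
noncomputable def discUnif (T : ℕ) (x : Fin T → ℝ) : Measure ℝ :=
  ((T : ℝ≥0∞))⁻¹ • ∑ i : Fin T, Measure.dirac (x i)

open Set

lemma discUnif_apply (T : ℕ) (x : Fin T → ℝ) {s : Set ℝ} (hs : MeasurableSet s) :
    discUnif T x s = ((T : ℝ≥0∞))⁻¹ * ∑ i : Fin T, s.indicator 1 (x i) := by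
  simp [discUnif, Measure.finset_sum_apply, Measure.dirac_apply' _ hs]

lemma map_discUnif (T : ℕ) (x : Fin T → ℝ) {f : ℝ → ℝ} (hf : Measurable f) :
    (discUnif T x).map f = discUnif T (f ∘ x) := by
  ext s hs
  rw [Measure.map_apply hf hs, discUnif_apply T x (hf hs), discUnif_apply T _ hs]
  congr 1

instance discUnif_prob (T : ℕ) [NeZero T] (x : Fin T → ℝ) :
    IsProbabilityMeasure (discUnif T x) := by
  constructor
  rw [discUnif_apply T x MeasurableSet.univ]
  simp [ENNReal.inv_mul_cancel, NeZero.ne T]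

lemma cdf_discUnif (T : ℕ) [NeZero T] (x : Fin T → ℝ) (z : ℝ) :
    cdf (discUnif T x) z = (∑ i : Fin T, (Ici (x i)).indicator (fun _ => (1:ℝ)) z) / T := by
  rw [cdf_eq_real, measureReal_def, discUnif_apply T x measurableSet_Iic]
  rw [ENNReal.toReal_mul, ENNReal.toReal_inv, ENNReal.toReal_natCast, ENNReal.toReal_sum]
  · rw [div_eq_inv_mul]
    congr 1
    refine Finset.sum_congr rfl fun i _ => ?_
    by_cases h : x i ≤ z <;>
      simp [Set.indicator_apply, Set.mem_Iic, Set.mem_Ici, h]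
  · intro i _
    by_cases h : x i ≤ z <;> simp [Set.indicator_apply, Set.mem_Iic, h]

lemma integrableOn_step (a u : ℝ) :
    IntegrableOn ((Ici a).indicator (fun _ => (1:ℝ))) (Iic u) volume := by
  rw [IntegrableOn, integrable_indicator_iff measurableSet_Ici, IntegrableOn,
    Measure.restrict_restrict measurableSet_Ici, Set.Ici_inter_Iic]
  exact integrableOn_const measure_Icc_lt_top.ne

lemma integral_step (a u : ℝ) :
    ∫ z in Iic u, (Ici a).indicator (fun _ => (1:ℝ)) z = max (u - a) 0 := by
  rw [integral_indicator measurableSet_Ici, Measure.restrict_restrict measurableSet_Ici,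
    Set.Ici_inter_Iic, setIntegral_const, Real.volume_real_Icc, smul_eq_mul, mul_one]

lemma integrableOn_cdf_discUnif (T : ℕ) [NeZero T] (x : Fin T → ℝ) (u : ℝ) :
    IntegrableOn (cdf (discUnif T x)) (Iic u) volume := by
  have : cdf (discUnif T x) =
      fun z => (∑ i : Fin T, (Ici (x i)).indicator (fun _ => (1:ℝ)) z) / T := by
    funext z; exact cdf_discUnif T x z
  rw [this]
  simp_rw [div_eq_mul_inv]
  exact (integrable_finset_sum _ (fun i _ => integrableOn_step (x i) u)).mul_const _

lemma integral_cdf_discUnif (T : ℕ) [NeZero T] (x : Fin T → ℝ) (u : ℝ) :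
    ∫ z in Iic u, cdf (discUnif T x) z = (∑ i : Fin T, max (u - x i) 0) / T := by
  have : ∀ z, cdf (discUnif T x) z =
      (∑ i : Fin T, (Ici (x i)).indicator (fun _ => (1:ℝ)) z) / T := cdf_discUnif T x
  simp_rw [this, div_eq_mul_inv]
  rw [integral_mul_const, integral_finset_sum _ (fun i _ => integrableOn_step (x i) u)]
  simp_rw [integral_step]

lemma ssd_discUnif_iff (T : ℕ) [NeZero T] (a b : Fin T → ℝ) :
    SSD (discUnif T a) (discUnif T b) ↔
      ∀ u : ℝ, ∑ i : Fin T, max (u - a i) 0 ≤ ∑ i : Fin T, max (u - b i) 0 := by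
  have hT : (0:ℝ) < T := Nat.cast_pos.2 (Nat.pos_of_ne_zero (NeZero.ne T))
  unfold SSD
  refine forall_congr' fun u => ?_
  rw [integral_sub (integrableOn_cdf_discUnif T a u) (integrableOn_cdf_discUnif T b u),
    integral_cdf_discUnif, integral_cdf_discUnif, sub_nonpos,
    div_le_div_iff_of_pos_right hT]

lemma pos_part_sum_iff (T : ℕ) (a b : Fin T → ℝ) (ha : Monotone a) (hb : Monotone b) :
    (∀ u : ℝ, ∑ i : Fin T, max (u - a i) 0 ≤ ∑ i : Fin T, max (u - b i) 0) ↔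
      ∀ k : Fin T, ∑ i ∈ Finset.Iic k, b i ≤ ∑ i ∈ Finset.Iic k, a i := by
  constructor
  · intro h k
    have hu := h (b k)
    have hb' : ∑ i : Fin T, max (b k - b i) 0 = ∑ i ∈ Finset.Iic k, (b k - b i) := by
      rw [← Finset.sum_subset (Finset.subset_univ (Finset.Iic k))]
      · exact Finset.sum_congr rfl fun i hi =>
          max_eq_left (sub_nonneg.2 (hb (Finset.mem_Iic.1 hi)))
      · intro i _ hi
        exact max_eq_right (sub_nonpos.2 (hb (le_of_not_ge (Finset.mem_Iic.not.1 hi))))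
    have ha' : ∑ i ∈ Finset.Iic k, (b k - a i) ≤ ∑ i : Fin T, max (b k - a i) 0 :=
      le_trans (Finset.sum_le_sum fun i _ => le_max_left (b k - a i) 0)
        (Finset.sum_le_sum_of_subset_of_nonneg (Finset.subset_univ _)
          (fun i _ _ => le_max_right _ _))
    have : ∑ i ∈ Finset.Iic k, (b k - a i) ≤ ∑ i ∈ Finset.Iic k, (b k - b i) := by
      calc ∑ i ∈ Finset.Iic k, (b k - a i) ≤ _ := ha'
        _ ≤ _ := hu
        _ = _ := hb'
    simp only [Finset.sum_sub_distrib] at this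
    linarith
  · intro h u
    classical
    set s : Finset (Fin T) := Finset.univ.filter (fun i => a i < u) with hs
    have hsum : ∑ i ∈ s, b i ≤ ∑ i ∈ s, a i := by
      rcases Finset.eq_empty_or_nonempty s with he | hne
      · simp [he]
      · have hsk : s = Finset.Iic (s.max' hne) := by
          ext i
          simp only [hs, Finset.mem_filter, Finset.mem_univ, true_and, Finset.mem_Iic]
          constructor
          · intro hi
            exact Finset.le_max' s i (by simp [hs, hi])
          · intro hi
            have := Finset.max'_mem s hne
            simp only [hs, Finset.mem_filter, Finset.mem_univ, true_and] at this
            exact lt_of_le_of_lt (ha hi) this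
        rw [hsk]
        exact h _
    have h1 : ∑ i : Fin T, max (u - a i) 0 = ∑ i ∈ s, (u - a i) := by
      rw [← Finset.sum_subset (Finset.subset_univ s)]
      · refine Finset.sum_congr rfl fun i hi => ?_
        simp only [hs, Finset.mem_filter] at hi
        exact max_eq_left (sub_nonneg.2 hi.2.le)
      · intro i _ hi
        simp only [hs, Finset.mem_filter, Finset.mem_univ, true_and, not_lt] at hi
        exact max_eq_right (sub_nonpos.2 hi)
    calc ∑ i : Fin T, max (u - a i) 0 = ∑ i ∈ s, (u - a i) := h1
      _ ≤ ∑ i ∈ s, (u - b i) := by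
          simp only [Finset.sum_sub_distrib]
          linarith
      _ ≤ ∑ i ∈ s, max (u - b i) 0 := Finset.sum_le_sum fun i _ => le_max_left _ _
      _ ≤ ∑ i : Fin T, max (u - b i) 0 :=
          Finset.sum_le_sum_of_subset_of_nonneg (Finset.subset_univ _)
            (fun i _ _ => le_max_right _ _)

/-- For discretely uniformly distributed coalitional values, a stochastic payoff without
transfer payments SSD-dominates the value of `S` iff all scaled partial sums of the grand
coalition's realizations dominate those of `S`. -/
theorem ssd_core_r_discrete_uniform_iff {N : Type*} [Fintype N] [DecidableEq N] [Nonempty N]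
    (T : ℕ) (hT : 1 ≤ T)
    (w : Finset N → Fin T → ℝ)
    (hw : ∀ S : Finset N, S.Nonempty → Monotone (w S))
    (r : N → ℝ) (hr : ∀ i, 0 ≤ r i) (hrN : ∑ i : N, r i = 1) :
    ∀ S : Finset N, S.Nonempty →
      (SSD ((discUnif T (w Finset.univ)).map (fun z => (∑ i ∈ S, r i) * z))
          (discUnif T (w S)) ↔
        ∀ k : Fin T,
          ∑ i ∈ Finset.Iic k, w S i ≤ (∑ i ∈ S, r i) * ∑ i ∈ Finset.Iic k, w Finset.univ i) := by
  intro S hS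
  haveI : NeZero T := ⟨Nat.one_le_iff_ne_zero.1 hT⟩
  set c : ℝ := ∑ i ∈ S, r i with hc
  have hc0 : 0 ≤ c := Finset.sum_nonneg fun i _ => hr i
  rw [map_discUnif T (w Finset.univ)
      (by fun_prop : Measurable fun z : ℝ => c * z),
    ssd_discUnif_iff]
  simp only [Function.comp_def]
  rw [pos_part_sum_iff T _ _ ((hw Finset.univ Finset.univ_nonempty).const_mul hc0) (hw S hS)]
  refine forall_congr' fun k => ?_
  rw [← Finset.mul_sum]
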